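/- arXiv:2403.00971 — 2 statements merged into one kernel-verified Lean document; each statement's English description precedes it below -/
import Mathlib

section
/- Assume b > 0 and that N·I(N) ≠ 1 for every N ≥ 0 (the equation N·I(N) = 1 has no solutions). Then every firing rate sequence {N_{k,∞}} is monotone increasing and tends to +∞. -/
open MeasureTheory Real Filter

open Topology

/-- The function `I(N)` from the NNLIF model. -/
noncomputable def Ifun (b V_R V_F N : ℝ) : ℝ :=
  ∫ v in Set.Iic V_F,
    Real.exp (-(v - b * N) ^ 2 / 2) * ∫ w in (max v V_R)..V_F, Real.exp ((w - b * N) ^ 2 / 2)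

private lemma contF (b V_R V_F : ℝ) :
    Continuous fun p : ℝ × ℝ =>
      Real.exp (-(p.2 - b * p.1) ^ 2 / 2) *
        ∫ w in (max p.2 V_R)..V_F, Real.exp ((w - b * p.1) ^ 2 / 2) := by
  apply Continuous.mul
  · fun_prop
  · have h : ∀ p : ℝ × ℝ,
        (∫ w in (max p.2 V_R)..V_F, Real.exp ((w - b * p.1) ^ 2 / 2))
          = -∫ w in V_F..(max p.2 V_R), Real.exp ((w - b * p.1) ^ 2 / 2) := fun p =>
      intervalIntegral.integral_symm _ _
    simp only [h]
    apply Continuous.neg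
    apply intervalIntegral.continuous_parametric_intervalIntegral_of_continuous
      (f := fun (p : ℝ × ℝ) (t : ℝ) => Real.exp ((t - b * p.1) ^ 2 / 2))
    · fun_prop
    · exact continuous_snd.max continuous_const

private lemma boundF {V_R V_F : ℝ} (hV : V_R < V_F) (b N0 : ℝ) :
    ∃ bnd : ℝ → ℝ, Integrable bnd ∧
      ∀ N : ℝ, |N - N0| ≤ 1 → ∀ v : ℝ, v ≤ V_F →
        ‖Real.exp (-(v - b * N) ^ 2 / 2) *
          ∫ w in (max v V_R)..V_F, Real.exp ((w - b * N) ^ 2 / 2)‖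
          ≤ bnd v := by
  set A : ℝ := (|V_R| + |V_F|) + |b| * (|N0| + 1) with hA
  clear_value A
  refine ⟨fun v => ((V_F - V_R) * Real.exp (A ^ 2 / 2) * Real.exp (b ^ 2))
    * Real.exp (-(1/4) * (v - b * N0) ^ 2), ?_, ?_⟩
  · exact ((integrable_exp_neg_mul_sq (by norm_num : (0:ℝ) < 1/4)).comp_sub_right
      (b * N0)).const_mul _
  · intro N hN v hv
    have hmax2 : max v V_R ≤ V_F := max_le hv hV.le
    have hinner_nonneg : 0 ≤ ∫ w in (max v V_R)..V_F, Real.exp ((w - b * N) ^ 2 / 2) :=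
      intervalIntegral.integral_nonneg hmax2 (fun w _ => (Real.exp_pos _).le)
    have hNabs : |N| ≤ |N0| + 1 := by
      have h1 := abs_sub_abs_le_abs_sub N N0
      linarith
    -- bound the inner integral
    have hinner_le : (∫ w in (max v V_R)..V_F, Real.exp ((w - b * N) ^ 2 / 2))
        ≤ (V_F - V_R) * Real.exp (A ^ 2 / 2) := by
      have hint : IntervalIntegrable (fun w => Real.exp ((w - b * N) ^ 2 / 2)) volume V_R V_F :=
        (by fun_prop : Continuous fun w => Real.exp ((w - b * N) ^ 2 / 2)).intervalIntegrable _ _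
      have h1 : (∫ w in (max v V_R)..V_F, Real.exp ((w - b * N) ^ 2 / 2))
          ≤ ∫ w in V_R..V_F, Real.exp ((w - b * N) ^ 2 / 2) := by
        apply intervalIntegral.integral_mono_interval (le_max_right _ _) hmax2 le_rfl
        · filter_upwards with w using (Real.exp_pos _).le
        · exact hint
      have h2 : (∫ w in V_R..V_F, Real.exp ((w - b * N) ^ 2 / 2))
          ≤ ∫ _w in V_R..V_F, Real.exp (A ^ 2 / 2) := by
        apply intervalIntegral.integral_mono_on hV.le hint (intervalIntegrable_const)
        intro w hw
        apply Real.exp_le_exp.mpr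
        have hwabs : |w| ≤ |V_R| + |V_F| := by
          rw [abs_le]
          constructor
          · have := hw.1; have := neg_abs_le V_R; have := abs_nonneg V_F; linarith
          · have := hw.2; have := le_abs_self V_F; have := abs_nonneg V_R; linarith
        have hbN : |b * N| ≤ |b| * (|N0| + 1) := by
          rw [abs_mul]
          exact mul_le_mul_of_nonneg_left hNabs (abs_nonneg b)
        have habs : |w - b * N| ≤ A := by
          calc |w - b * N| ≤ |w| + |b * N| := abs_sub _ _
            _ ≤ A := by rw [hA]; linarith
        have : (w - b * N) ^ 2 ≤ A ^ 2 := by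
          have := sq_abs (w - b * N)
          nlinarith [abs_nonneg (w - b * N)]
        linarith
      have h3 : (∫ _w in V_R..V_F, Real.exp (A ^ 2 / 2)) = (V_F - V_R) * Real.exp (A ^ 2 / 2) := by
        simp [smul_eq_mul]
      linarith
    -- bound the Gaussian factor
    have hg_le : Real.exp (-(v - b * N) ^ 2 / 2)
        ≤ Real.exp (b ^ 2) * Real.exp (-(1/4) * (v - b * N0) ^ 2) := by
      rw [← Real.exp_add]
      apply Real.exp_le_exp.mpr
      set t : ℝ := v - b * N0 with ht
      set d : ℝ := b * N0 - b * N with hd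
      have hvbN : v - b * N = t + d := by rw [ht, hd]; ring
      have hdval : d = b * (N0 - N) := by rw [hd]; ring
      clear_value t d
      have hdabs : |d| ≤ |b| := by
        rw [hdval, abs_mul, abs_sub_comm]
        calc |b| * |N - N0| ≤ |b| * 1 := mul_le_mul_of_nonneg_left hN (abs_nonneg b)
          _ = |b| := mul_one _
      have hd2 : d ^ 2 ≤ b ^ 2 := by
        have h1 := mul_self_le_mul_self (abs_nonneg d) hdabs
        nlinarith [abs_mul_abs_self d, abs_mul_abs_self b]
      rw [hvbN]
      nlinarith [sq_nonneg (t + 2 * d)]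
    -- combine
    have hFnn : 0 ≤ Real.exp (-(v - b * N) ^ 2 / 2) *
        ∫ w in (max v V_R)..V_F, Real.exp ((w - b * N) ^ 2 / 2) :=
      mul_nonneg (Real.exp_pos _).le hinner_nonneg
    rw [Real.norm_eq_abs, abs_of_nonneg hFnn]
    calc Real.exp (-(v - b * N) ^ 2 / 2) *
          (∫ w in (max v V_R)..V_F, Real.exp ((w - b * N) ^ 2 / 2))
        ≤ (Real.exp (b ^ 2) * Real.exp (-(1/4) * (v - b * N0) ^ 2)) *
          ((V_F - V_R) * Real.exp (A ^ 2 / 2)) := by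
          apply mul_le_mul hg_le hinner_le hinner_nonneg
          positivity
      _ = ((V_F - V_R) * Real.exp (A ^ 2 / 2) * Real.exp (b ^ 2)) *
          Real.exp (-(1/4) * (v - b * N0) ^ 2) := by ring

private lemma integrableF {V_R V_F : ℝ} (hV : V_R < V_F) (b N : ℝ) :
    IntegrableOn (fun v => Real.exp (-(v - b * N) ^ 2 / 2) *
      ∫ w in (max v V_R)..V_F, Real.exp ((w - b * N) ^ 2 / 2)) (Set.Iic V_F) := by
  obtain ⟨bnd, hbi, hb⟩ := boundF hV b N
  apply Integrable.mono hbi.integrableOn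
  · exact ((contF b V_R V_F).comp (continuous_const.prodMk continuous_id)).aestronglyMeasurable
  · rw [ae_restrict_iff' measurableSet_Iic]
    filter_upwards with v hv
    exact le_trans (hb N (by simp) v hv) (le_abs_self _)

private lemma Ifun_pos {V_R V_F : ℝ} (hV : V_R < V_F) (b N : ℝ) : 0 < Ifun b V_R V_F N := by
  unfold Ifun
  rw [setIntegral_pos_iff_support_of_nonneg_ae]
  · have hsub : Set.Iio V_F ⊆ Function.support (fun v => Real.exp (-(v - b * N) ^ 2 / 2) *
        ∫ w in (max v V_R)..V_F, Real.exp ((w - b * N) ^ 2 / 2)) ∩ Set.Iic V_F := by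
      intro v hv
      refine ⟨?_, Set.mem_Iic.mpr (le_of_lt hv)⟩
      have hmaxlt : max v V_R < V_F := max_lt hv hV
      have hip : 0 < ∫ w in (max v V_R)..V_F, Real.exp ((w - b * N) ^ 2 / 2) :=
        intervalIntegral.intervalIntegral_pos_of_pos
          ((by fun_prop : Continuous fun w => Real.exp ((w - b * N) ^ 2 / 2)).intervalIntegrable _ _)
          (fun w => Real.exp_pos _) hmaxlt
      exact (mul_pos (Real.exp_pos _) hip).ne'
    calc (0 : ENNReal) < volume (Set.Iio V_F) := by simp [Real.volume_Iio]
      _ ≤ _ := measure_mono hsub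
  · rw [EventuallyLE, ae_restrict_iff' measurableSet_Iic]
    filter_upwards with v hv
    exact mul_nonneg (Real.exp_pos _).le
      (intervalIntegral.integral_nonneg (max_le hv hV.le) (fun w _ => (Real.exp_pos _).le))
  · exact integrableF hV b N

private lemma Ifun_continuous {V_R V_F : ℝ} (hV : V_R < V_F) (b : ℝ) :
    Continuous fun N => Ifun b V_R V_F N := by
  rw [continuous_iff_continuousAt]
  intro N0
  obtain ⟨bnd, hbi, hb⟩ := boundF hV b N0
  unfold Ifun
  apply continuousAt_of_dominated (bound := bnd)
  · filter_upwards with N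
    exact ((contF b V_R V_F).comp (continuous_const.prodMk continuous_id)).aestronglyMeasurable
  · have hev : ∀ᶠ N in 𝓝 N0, |N - N0| ≤ 1 := by
      filter_upwards [Metric.closedBall_mem_nhds N0 one_pos] with N hN
      simpa [Metric.mem_closedBall, Real.dist_eq] using hN
    filter_upwards [hev] with N hN
    rw [ae_restrict_iff' measurableSet_Iic]
    filter_upwards with v hv
    exact hb N hN v hv
  · exact hbi.integrableOn
  · filter_upwards with v
    exact ((contF b V_R V_F).comp (continuous_id.prodMk continuous_const)).continuousAt

/-- Case 2 of Theorem 2.3: `b > 0` and the equation `N·I(N) = 1` has no solutions on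
`[0,∞)`. Then every firing rate sequence is monotone increasing and tends to `+∞`. -/
theorem firingRateSeq_no_equilibrium (b V_R V_F : ℝ) (hV : V_R < V_F) (hb : 0 < b)
    (hnosol : ∀ N : ℝ, 0 ≤ N → N * Ifun b V_R V_F N ≠ 1)
    (Nseq : ℕ → ℝ) (h0 : 0 ≤ Nseq 0)
    (hrec : ∀ k : ℕ, Nseq (k + 1) = 1 / Ifun b V_R V_F (Nseq k)) :
    Monotone Nseq ∧ Tendsto Nseq atTop atTop := by
  set φ : ℝ → ℝ := fun N => 1 / Ifun b V_R V_F N with hφ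
  have hIpos : ∀ N, 0 < Ifun b V_R V_F N := Ifun_pos hV b
  have hφcont : Continuous φ :=
    continuous_const.div (Ifun_continuous hV b) (fun N => (hIpos N).ne')
  have hfix : ∀ c : ℝ, 0 ≤ c → φ c ≠ c := by
    intro c hc h
    exact hnosol c hc ((eq_div_iff (hIpos c).ne').mp h.symm)
  have hgt : ∀ N, 0 ≤ N → N < φ N := by
    intro N hN
    by_contra hle
    push_neg at hle
    have hG : ContinuousOn (fun x => φ x - x) (Set.Icc 0 N) :=
      (hφcont.sub continuous_id).continuousOn
    have hmem : (0 : ℝ) ∈ Set.Icc (φ N - N) (φ 0 - 0) := by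
      constructor
      · linarith
      · have h00 : (0:ℝ) < φ 0 := div_pos one_pos (hIpos 0)
        linarith
    obtain ⟨c, hc, hGc⟩ := intermediate_value_Icc' hN hG hmem
    have hGc' : φ c - c = 0 := hGc
    exact hfix c hc.1 (by linarith)
  have hstep : ∀ k, 0 ≤ Nseq k ∧ Nseq k < Nseq (k + 1) := by
    intro k
    induction k with
    | zero => exact ⟨h0, by rw [hrec]; exact hgt _ h0⟩
    | succ n ih =>
      have h1 : 0 ≤ Nseq (n + 1) := le_trans ih.1 ih.2.le
      exact ⟨h1, by rw [hrec (n+1)]; exact hgt _ h1⟩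
  have hmono : Monotone Nseq := monotone_nat_of_le_succ fun k => (hstep k).2.le
  refine ⟨hmono, ?_⟩
  by_cases hbdd : BddAbove (Set.range Nseq)
  · exfalso
    have hL : Tendsto Nseq atTop (𝓝 (⨆ k, Nseq k)) := tendsto_atTop_ciSup hmono hbdd
    set L := ⨆ k, Nseq k with hLdef
    have hL0 : 0 ≤ L := le_trans h0 (le_ciSup hbdd 0)
    have h1 : Tendsto (fun k => Nseq (k + 1)) atTop (𝓝 L) := hL.comp (tendsto_add_atTop_nat 1)
    have h2 : Tendsto (fun k => φ (Nseq k)) atTop (𝓝 (φ L)) := (hφcont.tendsto L).comp hL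
    have heq : (fun k => Nseq (k + 1)) = fun k => φ (Nseq k) := funext fun k => hrec k
    rw [heq] at h1
    have : φ L = L := tendsto_nhds_unique h2 h1
    exact absurd this.symm (ne_of_lt (hgt L hL0))
  · exact tendsto_atTop_atTop_of_monotone' hmono hbdd
end

section
/- Let φ(v) := e^{v²/2} on (−∞, V_F] and write ‖u‖_{L²(φ)}² := ∫_{−∞}^{V_F} u(v)² φ(v) dv. For every N_∞ > 0 there exists a constant C > 0, depending only on N_∞, b, V_R and V_F, such that for all N₁, N₂ ∈ [N_∞/2, 2N_∞]: ‖h(·,N₁) − h(·,N₂)‖_{L²(φ)} ≤ C |N₁ − N₂| and ‖∂_v h(·,N₁) − ∂_v h(·,N₂)‖_{L²(φ)} ≤ C |N₁ − N₂| (all these weighted norms being finite). -/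
open MeasureTheory Real Filter
open Topology

/-- The pseudo-equilibrium `h(·,N)` associated to a firing rate `N`. -/
noncomputable def pseudoEq (b V_R V_F N v : ℝ) : ℝ :=
  (1 / Ifun b V_R V_F N) * Real.exp (-(v - b * N) ^ 2 / 2) *
    ∫ w in (max v V_R)..V_F, Real.exp ((w - b * N) ^ 2 / 2)


lemma exp_sub_exp_le (K x y : ℝ) (hx : x ≤ K) (hy : y ≤ K) :
    |Real.exp x - Real.exp y| ≤ Real.exp K * |x - y| := by
  wlog h : y ≤ x generalizing x y
  · rw [abs_sub_comm, abs_sub_comm x y]; exact this _ _ hy hx (le_of_not_ge h)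
  rw [abs_of_nonneg (sub_nonneg.2 (Real.exp_le_exp.2 h)), abs_of_nonneg (sub_nonneg.2 h)]
  have h1 : Real.exp x - Real.exp y = Real.exp x * (1 - Real.exp (y - x)) := by
    rw [mul_sub, mul_one, ← Real.exp_add]; ring_nf
  have h2 : (1 : ℝ) - Real.exp (y - x) ≤ x - y := by
    have := Real.add_one_le_exp (y - x); linarith
  have h3 : Real.exp x ≤ Real.exp K := Real.exp_le_exp.2 hx
  have h4 : (0:ℝ) ≤ 1 - Real.exp (y - x) := by
    have : Real.exp (y - x) ≤ 1 := by
      rw [Real.exp_le_one_iff]; linarith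
    linarith
  calc Real.exp x - Real.exp y = Real.exp x * (1 - Real.exp (y - x)) := h1
    _ ≤ Real.exp K * (x - y) := by
        apply mul_le_mul h3 h2 h4 (Real.exp_pos K).le

lemma integrable_poly_gauss (a : ℝ) (ha : 0 ≤ a) (n : ℕ) :
    Integrable (fun v : ℝ => (1 + |v|)^n * Real.exp (-v^2/2 + a*|v|)) := by
  have hb : (0:ℝ) < 3/8 := by norm_num
  have hint : Integrable (fun v : ℝ => (Real.exp (2*a^2) * 2^n) *
      ((2 + v^(2*n)) * Real.exp (-(3/8) * v^2))) := by
    apply Integrable.const_mul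
    have h1 : Integrable (fun v : ℝ => (2:ℝ) * Real.exp (-(3/8) * v^2)) :=
      (integrable_exp_neg_mul_sq hb).const_mul 2
    have h2 : Integrable (fun v : ℝ => v^(2*n) * Real.exp (-(3/8) * v^2)) := by
      have key : ∀ m : ℕ, Integrable (fun v : ℝ => v^m * Real.exp (-(3/8) * v^2)) := by
        intro m
        have h3 : (-1 : ℝ) < (m : ℝ) := by
          have : (0:ℝ) ≤ (m : ℝ) := Nat.cast_nonneg _
          linarith
        simpa [Real.rpow_natCast] using integrable_rpow_mul_exp_neg_mul_sq hb h3
      exact key (2*n)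
    simpa [add_mul] using h1.fun_add h2
  apply hint.mono'
  · exact (((continuous_const.add continuous_abs).pow n).mul
      ((continuous_id.pow 2 |>.neg.div_const 2).add (continuous_const.mul continuous_abs)).rexp).aestronglyMeasurable
  · filter_upwards with v
    rw [Real.norm_eq_abs, abs_of_nonneg (by positivity)]
    have e1 : Real.exp (-v^2/2 + a*|v|) ≤ Real.exp (2*a^2) * Real.exp (-(3/8) * v^2) := by
      rw [← Real.exp_add, Real.exp_le_exp]
      nlinarith [sq_nonneg (|v| - 4*a), sq_abs v]
    have e2 : (1 + |v|)^n ≤ 2^n * (2 + v^(2*n)) := by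
      have habs : (1 + |v|)^n ≤ (2 * max 1 |v|)^n := by
        apply pow_le_pow_left₀ (by positivity)
        rcases le_total (|v|) 1 with h | h
        · calc 1 + |v| ≤ 2 := by linarith
            _ ≤ 2 * max 1 |v| := by nlinarith [le_max_left (1:ℝ) |v|]
        · calc 1 + |v| ≤ 2 * |v| := by linarith
            _ ≤ 2 * max 1 |v| := by nlinarith [le_max_right (1:ℝ) |v|]
      calc (1 + |v|)^n ≤ (2 * max 1 |v|)^n := habs
        _ = 2^n * (max 1 |v|)^n := mul_pow 2 _ n
        _ ≤ 2^n * (2 + v^(2*n)) := by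
            gcongr
            rcases le_total (|v|) 1 with h | h
            · rw [max_eq_left h]; rw [one_pow]
              nlinarith [even_two_mul n |>.pow_nonneg v]
              
            · rw [max_eq_right h]
              have : |v|^n ≤ |v|^(2*n) := pow_le_pow_right₀ h (by omega)
              have h2 : |v|^(2*n) = v^(2*n) := by
                rw [← abs_pow, abs_of_nonneg (even_two_mul n |>.pow_nonneg v)]
              nlinarith
    calc (1 + |v|)^n * Real.exp (-v^2/2 + a*|v|)
        ≤ (2^n * (2 + v^(2*n))) * (Real.exp (2*a^2) * Real.exp (-(3/8) * v^2)) := by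
          have hnn : (0:ℝ) ≤ 2^n * (2 + v^(2*n)) := by
            have := even_two_mul n |>.pow_nonneg v
            have h2n : (0:ℝ) ≤ 2^n := by positivity
            nlinarith
          apply mul_le_mul e2 e1 (Real.exp_pos _).le hnn
      _ = (Real.exp (2*a^2) * 2^n) * ((2 + v^(2*n)) * Real.exp (-(3/8) * v^2)) := by ring

noncomputable def Gg (b N v : ℝ) : ℝ := Real.exp (-(v - b*N)^2/2)
noncomputable def Ee (b N w : ℝ) : ℝ := Real.exp ((w - b*N)^2/2)
noncomputable def FF (b V_R N x : ℝ) : ℝ := ∫ w in V_R..x, Ee b N w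
noncomputable def JJ (b V_R V_F N v : ℝ) : ℝ := ∫ w in (max v V_R)..V_F, Ee b N w

lemma pseudoEq_eq (b V_R V_F N v : ℝ) :
    pseudoEq b V_R V_F N v = (1/Ifun b V_R V_F N) * Gg b N v * JJ b V_R V_F N v := rfl

lemma Ifun_eq (b V_R V_F N : ℝ) :
    Ifun b V_R V_F N = ∫ v in Set.Iic V_F, Gg b N v * JJ b V_R V_F N v := rfl

lemma continuous_Ee (b N : ℝ) : Continuous (Ee b N) := by
  unfold Ee; fun_prop

lemma continuous_Gg (b N : ℝ) : Continuous (Gg b N) := by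
  unfold Gg; fun_prop

lemma Ee_intInt (b N a c : ℝ) : IntervalIntegrable (Ee b N) volume a c :=
  (continuous_Ee b N).intervalIntegrable a c

lemma hasDerivAt_FF (b V_R N x : ℝ) : HasDerivAt (FF b V_R N) (Ee b N x) x :=
  intervalIntegral.integral_hasDerivAt_right (Ee_intInt b N V_R x)
    ((continuous_Ee b N).stronglyMeasurableAtFilter _ _) (continuous_Ee b N).continuousAt

lemma continuous_FF (b V_R N : ℝ) : Continuous (FF b V_R N) := by
  have : Differentiable ℝ (FF b V_R N) := fun x => (hasDerivAt_FF b V_R N x).differentiableAt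
  exact this.continuous

lemma JJ_eq (b V_R V_F N v : ℝ) :
    JJ b V_R V_F N v = FF b V_R N V_F - FF b V_R N (max v V_R) := by
  unfold JJ FF
  rw [intervalIntegral.integral_interval_sub_left (Ee_intInt b N V_R V_F)
    (Ee_intInt b N V_R (max v V_R))]

lemma continuous_JJ (b V_R V_F N : ℝ) : Continuous (fun v => JJ b V_R V_F N v) := by
  have : (fun v => JJ b V_R V_F N v)
      = fun v => FF b V_R N V_F - FF b V_R N (max v V_R) := funext (JJ_eq b V_R V_F N)
  rw [this]
  exact continuous_const.sub ((continuous_FF b V_R N).comp (continuous_id.max continuous_const))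

lemma continuous_pseudoEq (b V_R V_F N : ℝ) : Continuous (pseudoEq b V_R V_F N) := by
  have : pseudoEq b V_R V_F N
      = fun v => (1/Ifun b V_R V_F N) * Gg b N v * JJ b V_R V_F N v := funext (pseudoEq_eq b V_R V_F N)
  rw [this]
  exact (continuous_const.mul (continuous_Gg b N)).mul (continuous_JJ b V_R V_F N)

lemma hasDerivAt_Gg (b N v : ℝ) : HasDerivAt (Gg b N) (-(v - b*N) * Gg b N v) v := by
  have h1 : HasDerivAt (fun u : ℝ => -(u - b*N)^2/2) (-(v - b*N)) v := by
    have : HasDerivAt (fun u : ℝ => u - b*N) 1 v := (hasDerivAt_id v).sub_const _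
    have h2 := (this.fun_pow 2)
    have h3 := (h2.neg).div_const 2
    refine h3.congr_deriv ?_
    norm_num
    ring
  have h2 := h1.exp
  have : (fun u : ℝ => Real.exp (-(u - b*N)^2/2)) = Gg b N := rfl
  rw [this] at h2
  convert h2 using 1
  unfold Gg
  ring

lemma Gg_mul_Ee (b N v : ℝ) : Gg b N v * Ee b N v = 1 := by
  unfold Gg Ee
  rw [← Real.exp_add]
  ring_nf
  exact Real.exp_zero

lemma deriv_pseudoEq (b V_R V_F N : ℝ) (hV : V_R < V_F) (v : ℝ) (hv : v ≠ V_R) :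
    deriv (pseudoEq b V_R V_F N) v
      = -(v - b*N) * pseudoEq b V_R V_F N v
        - Set.indicator (Set.Ioi V_R) (fun _ => 1 / Ifun b V_R V_F N) v := by
  set I := Ifun b V_R V_F N
  rcases hv.lt_or_gt with h | h
  · -- v < V_R
    have hmem : Set.Iio V_R ∈ 𝓝 v := Iio_mem_nhds h
    have hev : (fun u => (1/I) * Gg b N u * (FF b V_R N V_F - FF b V_R N V_R))
        =ᶠ[𝓝 v] pseudoEq b V_R V_F N := by
      filter_upwards [hmem] with u hu
      rw [pseudoEq_eq, JJ_eq, max_eq_right (le_of_lt hu)]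
    have hd : HasDerivAt (fun u => (1/I) * Gg b N u * (FF b V_R N V_F - FF b V_R N V_R))
        ((1/I) * (-(v - b*N) * Gg b N v) * (FF b V_R N V_F - FF b V_R N V_R)) v := by
      exact (((hasDerivAt_Gg b N v).const_mul (1/I)).mul_const _)
    have := (hd.congr_of_eventuallyEq hev.symm).deriv
    rw [this, Set.indicator_of_notMem (by simpa using h.le.not_gt)]
    rw [pseudoEq_eq, JJ_eq, max_eq_right h.le]
    ring
  · -- V_R < v
    have hmem : Set.Ioi V_R ∈ 𝓝 v := Ioi_mem_nhds h
    have hev : (fun u => (1/I) * Gg b N u * (FF b V_R N V_F - FF b V_R N u))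
        =ᶠ[𝓝 v] pseudoEq b V_R V_F N := by
      filter_upwards [hmem] with u hu
      rw [pseudoEq_eq, JJ_eq, max_eq_left (le_of_lt hu)]
    have hd : HasDerivAt (fun u => (1/I) * Gg b N u * (FF b V_R N V_F - FF b V_R N u))
        ((1/I) * (-(v - b*N) * Gg b N v) * (FF b V_R N V_F - FF b V_R N v)
          + (1/I) * Gg b N v * (-(Ee b N v))) v := by
      have h1 : HasDerivAt (fun u => (1/I) * Gg b N u) ((1/I) * (-(v - b*N) * Gg b N v)) v :=
        (hasDerivAt_Gg b N v).const_mul (1/I)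
      have h2 : HasDerivAt (fun u => FF b V_R N V_F - FF b V_R N u) (-(Ee b N v)) v :=
        (hasDerivAt_FF b V_R N v).const_sub _
      have h3 := h1.mul h2
      exact h3
    have := (hd.congr_of_eventuallyEq hev.symm).deriv
    rw [this, Set.indicator_of_mem (by simpa using h)]
    rw [pseudoEq_eq, JJ_eq, max_eq_left h.le]
    have hge : (1/I) * Gg b N v * (-(Ee b N v)) = -(1/I) := by
      have h2 := Gg_mul_Ee b N v
      calc (1/I) * Gg b N v * (-(Ee b N v)) = -(Gg b N v * Ee b N v * (1/I)) := by ring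
        _ = -(1/I) := by rw [h2, one_mul]
    rw [hge]
    ring

section Bounds

variable {b V_R V_F Ninf : ℝ}

/-- bound for |b*N| -/
lemma bN_abs_le {N : ℝ} (hNinf : 0 < Ninf) (hN : N ∈ Set.Icc (Ninf/2) (2*Ninf)) :
    |b * N| ≤ |b| * (2*Ninf) := by
  rw [abs_mul]
  have h1 : |N| ≤ 2*Ninf := by
    rw [abs_of_nonneg (by linarith [hN.1])]
    exact hN.2
  exact mul_le_mul_of_nonneg_left h1 (abs_nonneg b)

/-- bound for |w - b*N| on [V_R, V_F] -/
lemma wsub_abs_le {N w : ℝ} (hNinf : 0 < Ninf) (hN : N ∈ Set.Icc (Ninf/2) (2*Ninf))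
    (hw : w ∈ Set.Icc V_R V_F) :
    |w - b*N| ≤ max |V_R| |V_F| + |b| * (2*Ninf) := by
  have h1 : |w| ≤ max |V_R| |V_F| := by
    rw [abs_le]
    constructor
    · calc -(max |V_R| |V_F|) ≤ -|V_R| := by simp [le_max_left]
        _ ≤ V_R := neg_abs_le V_R
        _ ≤ w := hw.1
    · calc w ≤ V_F := hw.2
        _ ≤ |V_F| := le_abs_self V_F
        _ ≤ max |V_R| |V_F| := le_max_right _ _
  calc |w - b*N| ≤ |w| + |b*N| := abs_sub _ _
    _ ≤ max |V_R| |V_F| + |b| * (2*Ninf) := add_le_add h1 (bN_abs_le hNinf hN)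

lemma Ee_le_of_abs_le {b N w R : ℝ} (h : |w - b*N| ≤ R) : Ee b N w ≤ Real.exp (R^2/2) := by
  unfold Ee
  rw [Real.exp_le_exp]
  have : (w - b*N)^2 ≤ R^2 := by
    have := abs_nonneg (w - b*N)
    nlinarith [sq_abs (w - b*N)]
  linarith

lemma JJ_nonneg {N v : ℝ} (hV : V_R < V_F) (hv : v ≤ V_F) : 0 ≤ JJ b V_R V_F N v := by
  unfold JJ
  apply intervalIntegral.integral_nonneg
  · exact max_le hv hV.le
  · intro w _; exact (Real.exp_pos _).le

lemma JJ_le {N v : ℝ} (hV : V_R < V_F) (hNinf : 0 < Ninf)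
    (hN : N ∈ Set.Icc (Ninf/2) (2*Ninf)) (hv : v ≤ V_F) :
    JJ b V_R V_F N v ≤ (V_F - V_R) * Real.exp ((max |V_R| |V_F| + |b| * (2*Ninf))^2/2) := by
  set R := max |V_R| |V_F| + |b| * (2*Ninf) with hR
  have hmax : max v V_R ≤ V_F := max_le hv hV.le
  have hmaxR : V_R ≤ max v V_R := le_max_right _ _
  have key : ‖∫ w in (max v V_R)..V_F, Ee b N w‖ ≤ Real.exp (R^2/2) * |V_F - max v V_R| := by
    apply intervalIntegral.norm_integral_le_of_norm_le_const
    intro w hw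
    rw [Set.uIoc_of_le hmax] at hw
    have hw' : w ∈ Set.Icc V_R V_F := ⟨hmaxR.trans hw.1.le, hw.2⟩
    rw [Real.norm_eq_abs, abs_of_pos (by unfold Ee; positivity)]
    exact Ee_le_of_abs_le (wsub_abs_le hNinf hN hw')
  have h2 : |V_F - max v V_R| ≤ V_F - V_R := by
    rw [abs_of_nonneg (by linarith)]
    linarith
  calc JJ b V_R V_F N v ≤ |JJ b V_R V_F N v| := le_abs_self _
    _ = ‖∫ w in (max v V_R)..V_F, Ee b N w‖ := rfl
    _ ≤ Real.exp (R^2/2) * |V_F - max v V_R| := key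
    _ ≤ Real.exp (R^2/2) * (V_F - V_R) := by
        apply mul_le_mul_of_nonneg_left h2 (Real.exp_pos _).le
    _ = (V_F - V_R) * Real.exp (R^2/2) := mul_comm _ _

lemma JJ_lip {N₁ N₂ v : ℝ} (hV : V_R < V_F) (hNinf : 0 < Ninf)
    (hN₁ : N₁ ∈ Set.Icc (Ninf/2) (2*Ninf)) (hN₂ : N₂ ∈ Set.Icc (Ninf/2) (2*Ninf)) (hv : v ≤ V_F) :
    |JJ b V_R V_F N₁ v - JJ b V_R V_F N₂ v|
      ≤ ((V_F - V_R) * Real.exp ((max |V_R| |V_F| + |b| * (2*Ninf))^2/2) *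
          (|b| * (max |V_R| |V_F| + |b| * (2*Ninf)))) * |N₁ - N₂| := by
  set R := max |V_R| |V_F| + |b| * (2*Ninf) with hR
  have hmax : max v V_R ≤ V_F := max_le hv hV.le
  have hmaxR : V_R ≤ max v V_R := le_max_right _ _
  have hsub : JJ b V_R V_F N₁ v - JJ b V_R V_F N₂ v
      = ∫ w in (max v V_R)..V_F, (Ee b N₁ w - Ee b N₂ w) := by
    unfold JJ
    rw [intervalIntegral.integral_sub (Ee_intInt b N₁ _ _) (Ee_intInt b N₂ _ _)]
  have key : ‖∫ w in (max v V_R)..V_F, (Ee b N₁ w - Ee b N₂ w)‖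
      ≤ (Real.exp (R^2/2) * (|b| * R * |N₁ - N₂|)) * |V_F - max v V_R| := by
    apply intervalIntegral.norm_integral_le_of_norm_le_const
    intro w hw
    rw [Set.uIoc_of_le hmax] at hw
    have hw' : w ∈ Set.Icc V_R V_F := ⟨hmaxR.trans hw.1.le, hw.2⟩
    have h1 : |w - b*N₁| ≤ R := wsub_abs_le hNinf hN₁ hw'
    have h2 : |w - b*N₂| ≤ R := wsub_abs_le hNinf hN₂ hw'
    have e1 : (w - b*N₁)^2/2 ≤ R^2/2 := by nlinarith [sq_abs (w - b*N₁), abs_nonneg (w-b*N₁)]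
    have e2 : (w - b*N₂)^2/2 ≤ R^2/2 := by nlinarith [sq_abs (w - b*N₂), abs_nonneg (w-b*N₂)]
    rw [Real.norm_eq_abs]
    calc |Ee b N₁ w - Ee b N₂ w|
        ≤ Real.exp (R^2/2) * |(w - b*N₁)^2/2 - (w - b*N₂)^2/2| :=
          exp_sub_exp_le _ _ _ e1 e2
      _ ≤ Real.exp (R^2/2) * (|b| * R * |N₁ - N₂|) := by
          apply mul_le_mul_of_nonneg_left _ (Real.exp_pos _).le
          have expand : (w - b*N₁)^2/2 - (w - b*N₂)^2/2
              = ((w - b*N₁) + (w - b*N₂)) * (b * (N₂ - N₁)) / 2 := by ring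
          rw [expand, abs_div, abs_mul, abs_mul]
          have hsum : |(w - b*N₁) + (w - b*N₂)| ≤ 2*R := by
            calc |(w - b*N₁) + (w - b*N₂)| ≤ |w - b*N₁| + |w - b*N₂| := abs_add_le _ _
              _ ≤ 2*R := by linarith
          have hd : |N₂ - N₁| = |N₁ - N₂| := abs_sub_comm _ _
          rw [hd]
          have habs2 : |(2:ℝ)| = 2 := by norm_num
          rw [habs2]
          have hb : 0 ≤ |b| * |N₁ - N₂| := by positivity
          nlinarith [mul_le_mul_of_nonneg_right hsum hb]
  have h2 : |V_F - max v V_R| ≤ V_F - V_R := by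
    rw [abs_of_nonneg (by linarith)]
    linarith
  rw [hsub]
  calc ‖∫ w in (max v V_R)..V_F, (Ee b N₁ w - Ee b N₂ w)‖
      ≤ (Real.exp (R^2/2) * (|b| * R * |N₁ - N₂|)) * |V_F - max v V_R| := key
    _ ≤ Real.exp (R^2/2) * (|b| * R * |N₁ - N₂|) * (V_F - V_R) := by
        have hRnn : 0 ≤ R := by
          rw [hR]
          have : (0:ℝ) ≤ |V_R| ⊔ |V_F| := le_trans (abs_nonneg V_R) (le_max_left _ _)
          nlinarith [abs_nonneg b]
        have hnn : 0 ≤ Real.exp (R^2/2) * (|b| * R * |N₁ - N₂|) := by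
          have : (0:ℝ) ≤ |b| * R * |N₁ - N₂| := by
            apply mul_nonneg (mul_nonneg (abs_nonneg b) hRnn) (abs_nonneg _)
          positivity
        exact mul_le_mul_of_nonneg_left h2 hnn
    _ = ((V_F - V_R) * Real.exp (R^2/2) * (|b| * R)) * |N₁ - N₂| := by ring

end Bounds

noncomputable def Gs (b Ninf v : ℝ) : ℝ := Real.exp (-v^2/2 + (|b| * (2*Ninf)) * |v|)

section Bounds2
variable {b V_R V_F Ninf : ℝ}

lemma Gs_pos (v : ℝ) : 0 < Gs b Ninf v := Real.exp_pos _

lemma Gg_exponent_le {N v : ℝ} (hNinf : 0 < Ninf) (hN : N ∈ Set.Icc (Ninf/2) (2*Ninf)) :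
    -(v - b*N)^2/2 ≤ -v^2/2 + (|b| * (2*Ninf)) * |v| := by
  have h1 : |b*N| ≤ |b| * (2*Ninf) := bN_abs_le hNinf hN
  have h2 : b*N*v ≤ |b*N| * |v| := by
    calc b*N*v ≤ |b*N*v| := le_abs_self _
      _ = |b*N| * |v| := abs_mul _ _
  nlinarith [sq_nonneg (b*N), abs_nonneg v, abs_nonneg (b*N),
    mul_le_mul_of_nonneg_right h1 (abs_nonneg v)]

lemma Gg_le_Gs {N v : ℝ} (hNinf : 0 < Ninf) (hN : N ∈ Set.Icc (Ninf/2) (2*Ninf)) :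
    Gg b N v ≤ Gs b Ninf v :=
  Real.exp_le_exp.2 (Gg_exponent_le hNinf hN)

lemma Gg_lip {N₁ N₂ v : ℝ} (hNinf : 0 < Ninf)
    (hN₁ : N₁ ∈ Set.Icc (Ninf/2) (2*Ninf)) (hN₂ : N₂ ∈ Set.Icc (Ninf/2) (2*Ninf)) :
    |Gg b N₁ v - Gg b N₂ v|
      ≤ Gs b Ninf v * (|b| * (|v| + |b| * (2*Ninf))) * |N₁ - N₂| := by
  set Rp := |b| * (2*Ninf) with hRp
  have key : |Gg b N₁ v - Gg b N₂ v|
      ≤ Real.exp (-v^2/2 + Rp * |v|) * |(-(v - b*N₁)^2/2) - (-(v - b*N₂)^2/2)| :=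
    exp_sub_exp_le _ _ _ (Gg_exponent_le hNinf hN₁) (Gg_exponent_le hNinf hN₂)
  have h2 : |(-(v - b*N₁)^2/2) - (-(v - b*N₂)^2/2)| ≤ (|b| * (|v| + Rp)) * |N₁ - N₂| := by
    have expand : (-(v - b*N₁)^2/2) - (-(v - b*N₂)^2/2)
        = ((v - b*N₁) + (v - b*N₂)) * (b*(N₁ - N₂)) / 2 := by ring
    rw [expand, abs_div, abs_mul, abs_mul]
    have habs2 : |(2:ℝ)| = 2 := by norm_num
    rw [habs2]
    have h1 : |b*N₁| ≤ Rp := bN_abs_le hNinf hN₁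
    have h2' : |b*N₂| ≤ Rp := bN_abs_le hNinf hN₂
    have hsum : |(v - b*N₁) + (v - b*N₂)| ≤ 2*(|v| + Rp) := by
      calc |(v - b*N₁) + (v - b*N₂)| ≤ |v - b*N₁| + |v - b*N₂| := abs_add_le _ _
        _ ≤ (|v| + |b*N₁|) + (|v| + |b*N₂|) := add_le_add (abs_sub _ _) (abs_sub _ _)
        _ ≤ 2*(|v| + Rp) := by linarith
    have hb : 0 ≤ |b| * |N₁ - N₂| := by positivity
    nlinarith [mul_le_mul_of_nonneg_right hsum hb]
  calc |Gg b N₁ v - Gg b N₂ v|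
      ≤ Real.exp (-v^2/2 + Rp * |v|) * |(-(v - b*N₁)^2/2) - (-(v - b*N₂)^2/2)| := key
    _ ≤ Real.exp (-v^2/2 + Rp * |v|) * ((|b| * (|v| + Rp)) * |N₁ - N₂|) :=
        mul_le_mul_of_nonneg_left h2 (Real.exp_pos _).le
    _ = Gs b Ninf v * (|b| * (|v| + Rp)) * |N₁ - N₂| := by rw [Gs]; ring

lemma integrable_Gs_poly (hNinf : 0 < Ninf) (n : ℕ) :
    Integrable (fun v : ℝ => (1+|v|)^n * Gs b Ninf v) := by
  have ha : 0 ≤ |b| * (2*Ninf) := mul_nonneg (abs_nonneg b) (by linarith)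
  exact integrable_poly_gauss _ ha n

lemma integrable_Gs (hNinf : 0 < Ninf) : Integrable (fun v : ℝ => Gs b Ninf v) := by
  have := integrable_Gs_poly (b := b) hNinf 0
  simpa using this

lemma integrable_GJ (hV : V_R < V_F) (hNinf : 0 < Ninf) {N : ℝ}
    (hN : N ∈ Set.Icc (Ninf/2) (2*Ninf)) :
    IntegrableOn (fun v => Gg b N v * JJ b V_R V_F N v) (Set.Iic V_F) := by
  set M₁ := (V_F - V_R) * Real.exp ((max |V_R| |V_F| + |b| * (2*Ninf))^2/2) with hM₁
  apply Integrable.mono' (g := fun v => M₁ * Gs b Ninf v)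
      (((integrable_Gs hNinf).const_mul M₁).integrableOn)
  · exact ((continuous_Gg b N).mul (continuous_JJ b V_R V_F N)).aestronglyMeasurable.restrict
  · rw [ae_restrict_iff' measurableSet_Iic]
    filter_upwards with v hv
    have h1 : 0 ≤ JJ b V_R V_F N v := JJ_nonneg hV hv
    have h2 : JJ b V_R V_F N v ≤ M₁ := JJ_le hV hNinf hN hv
    have h3 : 0 < Gg b N v := Real.exp_pos _
    rw [Real.norm_eq_abs, abs_of_nonneg (mul_nonneg h3.le h1)]
    calc Gg b N v * JJ b V_R V_F N v ≤ Gs b Ninf v * M₁ := by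
          apply mul_le_mul (Gg_le_Gs hNinf hN) h2 h1 (Gs_pos v).le
      _ = M₁ * Gs b Ninf v := mul_comm _ _

lemma Ifun_ge (hV : V_R < V_F) (hNinf : 0 < Ninf) :
    ∃ δ : ℝ, 0 < δ ∧ ∀ N ∈ Set.Icc (Ninf/2) (2*Ninf), δ ≤ Ifun b V_R V_F N := by
  set R₂ := |V_R| + 1 + |b| * (2*Ninf) with hR₂
  refine ⟨(V_F - V_R) * Real.exp (-(R₂^2)/2), mul_pos (by linarith) (Real.exp_pos _), fun N hN => ?_⟩
  set c := (V_F - V_R) * Real.exp (-(R₂^2)/2) with hc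
  rw [Ifun_eq]
  have hIcc : Set.Icc (V_R - 1) V_R ⊆ Set.Iic V_F := fun x hx => le_trans hx.2 hV.le
  have hGJint : IntegrableOn (fun v => Gg b N v * JJ b V_R V_F N v) (Set.Iic V_F) :=
    integrable_GJ hV hNinf hN
  have step1 : ∫ v in Set.Icc (V_R - 1) V_R, Gg b N v * JJ b V_R V_F N v
      ≤ ∫ v in Set.Iic V_F, Gg b N v * JJ b V_R V_F N v := by
    apply setIntegral_mono_set hGJint
    · rw [EventuallyLE, ae_restrict_iff' measurableSet_Iic]
      filter_upwards with v hv
      exact mul_nonneg (Real.exp_pos _).le (JJ_nonneg hV hv)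
    · exact HasSubset.Subset.eventuallyLE hIcc
  have step2 : c ≤ ∫ v in Set.Icc (V_R - 1) V_R, Gg b N v * JJ b V_R V_F N v := by
    have hpt : ∀ v ∈ Set.Icc (V_R - 1) V_R,
        Real.exp (-(R₂^2)/2) * (V_F - V_R) ≤ Gg b N v * JJ b V_R V_F N v := by
      intro v hv
      have hGg : Real.exp (-(R₂^2)/2) ≤ Gg b N v := by
        rw [Gg, Real.exp_le_exp]
        have hvabs : |v| ≤ |V_R| + 1 := by
          rw [abs_le]
          constructor
          · have := neg_abs_le V_R; linarith [hv.1]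
          · have := le_abs_self V_R; linarith [hv.2]
        have h1 : |v - b*N| ≤ R₂ := by
          calc |v - b*N| ≤ |v| + |b*N| := abs_sub _ _
            _ ≤ (|V_R| + 1) + |b| * (2*Ninf) := add_le_add hvabs (bN_abs_le hNinf hN)
            _ = R₂ := by rw [hR₂]
        nlinarith [sq_abs (v - b*N), abs_nonneg (v - b*N)]
      have hJJ : V_F - V_R ≤ JJ b V_R V_F N v := by
        have hmax : max v V_R = V_R := max_eq_right hv.2
        rw [JJ, hmax]
        have h1 : ∫ w in V_R..V_F, (1:ℝ) ≤ ∫ w in V_R..V_F, Ee b N w := by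
          apply intervalIntegral.integral_mono_on hV.le
            intervalIntegrable_const (Ee_intInt b N V_R V_F)
          intro w _
          rw [Ee]
          exact Real.one_le_exp (by positivity)
        simpa using h1
      exact mul_le_mul hGg hJJ (by linarith) (le_trans (Real.exp_pos _).le hGg)
    have hconst : ∫ _v in Set.Icc (V_R - 1) V_R, (Real.exp (-(R₂^2)/2) * (V_F - V_R))
        = Real.exp (-(R₂^2)/2) * (V_F - V_R) := by
      rw [setIntegral_const]
      rw [Real.volume_real_Icc]
      norm_num
    calc c = Real.exp (-(R₂^2)/2) * (V_F - V_R) := by rw [hc]; ring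
      _ = ∫ _v in Set.Icc (V_R - 1) V_R, (Real.exp (-(R₂^2)/2) * (V_F - V_R)) := hconst.symm
      _ ≤ ∫ v in Set.Icc (V_R - 1) V_R, Gg b N v * JJ b V_R V_F N v := by
          apply setIntegral_mono_on
            (integrableOn_const (by rw [Real.volume_Icc]; exact ENNReal.ofReal_ne_top))
            (hGJint.mono_set hIcc) measurableSet_Icc hpt
  linarith

end Bounds2

section Bounds3
variable {b V_R V_F Ninf : ℝ}

lemma Ifun_lip (hV : V_R < V_F) (hNinf : 0 < Ninf) :
    ∃ L : ℝ, 0 ≤ L ∧ ∀ N₁ ∈ Set.Icc (Ninf/2) (2*Ninf), ∀ N₂ ∈ Set.Icc (Ninf/2) (2*Ninf),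
      |Ifun b V_R V_F N₁ - Ifun b V_R V_F N₂| ≤ L * |N₁ - N₂| := by
  set Rp := |b| * (2*Ninf) with hRp
  set R := max |V_R| |V_F| + Rp with hRdef
  set M₁ := (V_F - V_R) * Real.exp (R^2/2) with hM₁
  set LJ := (V_F - V_R) * Real.exp (R^2/2) * (|b| * R) with hLJ
  have hRnn : 0 ≤ R := by
    have : (0:ℝ) ≤ max |V_R| |V_F| := le_trans (abs_nonneg V_R) (le_max_left _ _)
    have : (0:ℝ) ≤ Rp := by rw [hRp]; positivity
    nlinarith [le_trans (abs_nonneg V_R) (le_max_left |V_R| |V_F|)]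
  have hRpnn : 0 ≤ Rp := by rw [hRp]; positivity
  have hM₁nn : 0 ≤ M₁ := by
    rw [hM₁]; exact mul_nonneg (by linarith) (Real.exp_pos _).le
  have hLJnn : 0 ≤ LJ := by
    rw [hLJ]
    apply mul_nonneg (mul_nonneg (by linarith) (Real.exp_pos _).le) (mul_nonneg (abs_nonneg b) hRnn)
  set cI := |b| * M₁ * (1 + Rp) + LJ with hcI
  have hcInn : 0 ≤ cI := by
    rw [hcI]
    have : 0 ≤ |b| * M₁ * (1 + Rp) := by positivity
    linarith
  set KI := ∫ v in Set.Iic V_F, (1+|v|) * Gs b Ninf v with hKI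
  clear_value Rp R M₁ LJ cI
  have hKIint : IntegrableOn (fun v => (1+|v|) * Gs b Ninf v) (Set.Iic V_F) := by
    have := (integrable_Gs_poly (b := b) hNinf 1).integrableOn (s := Set.Iic V_F)
    simpa using this
  have hKInn : 0 ≤ KI := by
    rw [hKI]
    apply setIntegral_nonneg measurableSet_Iic
    intro v _
    exact mul_nonneg (by positivity) (Gs_pos v).le
  refine ⟨cI * KI, mul_nonneg hcInn hKInn, fun N₁ hN₁ N₂ hN₂ => ?_⟩
  have hI₁ := integrable_GJ (b := b) hV hNinf hN₁
  have hI₂ := integrable_GJ (b := b) hV hNinf hN₂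
  have hdiff : Ifun b V_R V_F N₁ - Ifun b V_R V_F N₂
      = ∫ v in Set.Iic V_F, (Gg b N₁ v * JJ b V_R V_F N₁ v - Gg b N₂ v * JJ b V_R V_F N₂ v) := by
    rw [Ifun_eq, Ifun_eq, integral_sub hI₁ hI₂]
  have hpt : ∀ v ∈ Set.Iic V_F,
      |Gg b N₁ v * JJ b V_R V_F N₁ v - Gg b N₂ v * JJ b V_R V_F N₂ v|
        ≤ (cI * |N₁ - N₂|) * ((1+|v|) * Gs b Ninf v) := by
    intro v hv
    have hv' : v ≤ V_F := hv
    have hJ₁nn := JJ_nonneg (b := b) (N := N₁) hV hv'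
    have hJ₁le := JJ_le (b := b) hV hNinf hN₁ hv'
    have hJlip := JJ_lip (b := b) hV hNinf hN₁ hN₂ hv'
    have hGlip := Gg_lip (b := b) (v := v) hNinf hN₁ hN₂
    rw [← hRp, ← hRdef, ← hM₁] at hJ₁le
    rw [← hRp, ← hRdef, ← hLJ] at hJlip
    rw [← hRp] at hGlip
    have hG₂ := Gg_le_Gs (b := b) (v := v) hNinf hN₂
    have hG₂nn : (0:ℝ) ≤ Gg b N₂ v := (Real.exp_pos _).le
    have hGsnn := (Gs_pos (b := b) (Ninf := Ninf) v).le
    have split : Gg b N₁ v * JJ b V_R V_F N₁ v - Gg b N₂ v * JJ b V_R V_F N₂ v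
        = (Gg b N₁ v - Gg b N₂ v) * JJ b V_R V_F N₁ v
          + Gg b N₂ v * (JJ b V_R V_F N₁ v - JJ b V_R V_F N₂ v) := by ring
    have t1 : |(Gg b N₁ v - Gg b N₂ v) * JJ b V_R V_F N₁ v|
        ≤ (Gs b Ninf v * (|b| * (|v| + Rp)) * |N₁ - N₂|) * M₁ := by
      rw [abs_mul, abs_of_nonneg hJ₁nn]
      apply mul_le_mul hGlip hJ₁le hJ₁nn
      apply mul_nonneg (mul_nonneg hGsnn (by positivity)) (abs_nonneg _)
    have t2 : |Gg b N₂ v * (JJ b V_R V_F N₁ v - JJ b V_R V_F N₂ v)|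
        ≤ Gs b Ninf v * (LJ * |N₁ - N₂|) := by
      rw [abs_mul, abs_of_nonneg hG₂nn]
      apply mul_le_mul hG₂ hJlip (abs_nonneg _) hGsnn
    calc |Gg b N₁ v * JJ b V_R V_F N₁ v - Gg b N₂ v * JJ b V_R V_F N₂ v|
        ≤ |(Gg b N₁ v - Gg b N₂ v) * JJ b V_R V_F N₁ v|
          + |Gg b N₂ v * (JJ b V_R V_F N₁ v - JJ b V_R V_F N₂ v)| := by
          rw [split]; exact abs_add_le _ _
      _ ≤ (Gs b Ninf v * (|b| * (|v| + Rp)) * |N₁ - N₂|) * M₁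
          + Gs b Ninf v * (LJ * |N₁ - N₂|) := add_le_add t1 t2
      _ ≤ (cI * |N₁ - N₂|) * ((1+|v|) * Gs b Ninf v) := by
          have habv : 0 ≤ |v| := abs_nonneg v
          have hbM : 0 ≤ |b| * M₁ := mul_nonneg (abs_nonneg b) hM₁nn
          have h1 : |v| + Rp ≤ (1+Rp)*(1+|v|) := by
            nlinarith [mul_nonneg hRpnn habv]
          have key : |b| * (|v| + Rp) * M₁ + LJ ≤ cI * (1+|v|) := by
            calc |b| * (|v| + Rp) * M₁ + LJ = (|b| * M₁)*(|v| + Rp) + LJ*1 := by ring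
              _ ≤ (|b| * M₁)*((1+Rp)*(1+|v|)) + LJ*(1+|v|) :=
                  add_le_add (mul_le_mul_of_nonneg_left h1 hbM)
                    (by nlinarith [mul_nonneg hLJnn habv])
              _ = cI * (1+|v|) := by rw [hcI]; ring
          have had : 0 ≤ Gs b Ninf v * |N₁ - N₂| := mul_nonneg hGsnn (abs_nonneg _)
          calc Gs b Ninf v * (|b| * (|v| + Rp)) * |N₁ - N₂| * M₁ + Gs b Ninf v * (LJ * |N₁ - N₂|)
              = (|b| * (|v| + Rp) * M₁ + LJ) * (Gs b Ninf v * |N₁ - N₂|) := by ring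
            _ ≤ (cI * (1+|v|)) * (Gs b Ninf v * |N₁ - N₂|) :=
                mul_le_mul_of_nonneg_right key had
            _ = (cI * |N₁ - N₂|) * ((1+|v|) * Gs b Ninf v) := by ring
  calc |Ifun b V_R V_F N₁ - Ifun b V_R V_F N₂|
      = |∫ v in Set.Iic V_F, (Gg b N₁ v * JJ b V_R V_F N₁ v - Gg b N₂ v * JJ b V_R V_F N₂ v)| := by
        rw [hdiff]
    _ ≤ ∫ v in Set.Iic V_F,
          |Gg b N₁ v * JJ b V_R V_F N₁ v - Gg b N₂ v * JJ b V_R V_F N₂ v| := by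
        simpa [Real.norm_eq_abs] using
          MeasureTheory.norm_integral_le_integral_norm (μ := volume.restrict (Set.Iic V_F))
            (f := fun v => Gg b N₁ v * JJ b V_R V_F N₁ v - Gg b N₂ v * JJ b V_R V_F N₂ v)
    _ ≤ ∫ v in Set.Iic V_F, (cI * |N₁ - N₂|) * ((1+|v|) * Gs b Ninf v) := by
        apply setIntegral_mono_on ((hI₁.sub hI₂).abs)
          (hKIint.const_mul _) measurableSet_Iic hpt
    _ = (cI * |N₁ - N₂|) * KI := by
        rw [hKI, MeasureTheory.integral_const_mul]
    _ = (cI * KI) * |N₁ - N₂| := by ring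

end Bounds3

noncomputable def Dfun (b V_R V_F N v : ℝ) : ℝ :=
  -(v - b*N) * pseudoEq b V_R V_F N v
    - Set.indicator (Set.Ioi V_R) (fun _ => 1 / Ifun b V_R V_F N) v

section Bounds4
variable {b V_R V_F Ninf : ℝ}

lemma deriv_pseudoEq' (hV : V_R < V_F) {N v : ℝ} (hv : v ≠ V_R) :
    deriv (pseudoEq b V_R V_F N) v = Dfun b V_R V_F N v :=
  deriv_pseudoEq b V_R V_F N hV v hv

set_option maxHeartbeats 2000000 in
lemma pseudo_pointwise (hV : V_R < V_F) (hNinf : 0 < Ninf) :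
    ∃ c : ℝ, 0 ≤ c ∧ ∀ N₁ ∈ Set.Icc (Ninf/2) (2*Ninf), ∀ N₂ ∈ Set.Icc (Ninf/2) (2*Ninf),
      ∀ v ≤ V_F,
      |pseudoEq b V_R V_F N₁ v - pseudoEq b V_R V_F N₂ v|
          ≤ c * ((1+|v|)^2 * Gs b Ninf v) * |N₁ - N₂| ∧
      |Dfun b V_R V_F N₁ v - Dfun b V_R V_F N₂ v|
          ≤ c * ((1+|v|)^2 * Gs b Ninf v) * |N₁ - N₂| := by
  obtain ⟨δ, hδ, hIge⟩ := Ifun_ge (b := b) hV hNinf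
  obtain ⟨L, hL, hIlip⟩ := Ifun_lip (b := b) hV hNinf
  set Rp := |b| * (2*Ninf) with hRp
  set R := max |V_R| |V_F| + Rp with hRdef
  set M₁ := (V_F - V_R) * Real.exp (R^2/2) with hM₁
  set LJ := (V_F - V_R) * Real.exp (R^2/2) * (|b| * R) with hLJ
  have hRpnn : 0 ≤ Rp := by rw [hRp]; positivity
  have hRnn : 0 ≤ R := by
    rw [hRdef]
    have h0 : (0:ℝ) ≤ max |V_R| |V_F| := le_trans (abs_nonneg V_R) (le_max_left _ _)
    linarith
  have hM₁nn : 0 ≤ M₁ := by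
    rw [hM₁]; exact mul_nonneg (by linarith) (Real.exp_pos _).le
  have hLJnn : 0 ≤ LJ := by
    rw [hLJ]
    exact mul_nonneg (mul_nonneg (by linarith) (Real.exp_pos _).le)
      (mul_nonneg (abs_nonneg b) hRnn)
  set EB := Real.exp ((max |V_R| |V_F|)^2/2) with hEB
  have hEBnn : 0 ≤ EB := (Real.exp_pos _).le
  set ch := (L/δ^2) * M₁ + (1/δ) * |b| * M₁ * (1+Rp) + (1/δ) * LJ with hch
  set cD := (1+Rp) * ch + |b| * (M₁/δ) + (L/δ^2) * EB with hcD
  have hchnn : 0 ≤ ch := by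
    rw [hch]
    have t1 : 0 ≤ (L/δ^2) * M₁ := mul_nonneg (div_nonneg hL (by positivity)) hM₁nn
    have t2 : 0 ≤ (1/δ) * |b| * M₁ * (1+Rp) := by
      apply mul_nonneg (mul_nonneg (mul_nonneg (one_div_nonneg.mpr hδ.le) (abs_nonneg b)) hM₁nn)
      linarith
    have t3 : 0 ≤ (1/δ) * LJ := mul_nonneg (one_div_nonneg.mpr hδ.le) hLJnn
    linarith
  have hcDnn : 0 ≤ cD := by
    rw [hcD]
    have t1 : 0 ≤ (1+Rp) * ch := mul_nonneg (by linarith) hchnn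
    have t2 : 0 ≤ |b| * (M₁/δ) := mul_nonneg (abs_nonneg b) (div_nonneg hM₁nn hδ.le)
    have t3 : 0 ≤ (L/δ^2) * EB := mul_nonneg (div_nonneg hL (sq_nonneg δ)) hEBnn
    linarith
  clear_value Rp R M₁ LJ EB ch cD
  refine ⟨ch + cD, by linarith, fun N₁ hN₁ N₂ hN₂ v hv => ?_⟩
  set I₁ := Ifun b V_R V_F N₁ with hI₁d
  set I₂ := Ifun b V_R V_F N₂ with hI₂d
  have hI₁ : δ ≤ I₁ := hIge N₁ hN₁
  have hI₂ : δ ≤ I₂ := hIge N₂ hN₂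
  have hI₁pos : 0 < I₁ := lt_of_lt_of_le hδ hI₁
  have hI₂pos : 0 < I₂ := lt_of_lt_of_le hδ hI₂
  clear_value I₁ I₂
  have hinvlip : |1/I₁ - 1/I₂| ≤ (L/δ^2) * |N₁ - N₂| := by
    have heq : 1/I₁ - 1/I₂ = (I₂ - I₁) / (I₁ * I₂) := by
      field_simp
    rw [heq, abs_div, abs_of_pos (mul_pos hI₁pos hI₂pos)]
    have hnum : |I₂ - I₁| ≤ L * |N₁ - N₂| := by
      rw [abs_sub_comm, hI₁d, hI₂d]
      exact hIlip N₁ hN₁ N₂ hN₂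
    have hden : δ^2 ≤ I₁ * I₂ := by nlinarith
    calc |I₂ - I₁| / (I₁ * I₂) ≤ (L * |N₁ - N₂|) / δ^2 :=
        div_le_div₀ (mul_nonneg hL (abs_nonneg _)) hnum (pow_pos hδ 2) hden
      _ = (L/δ^2) * |N₁ - N₂| := by ring
  -- basic facts at v
  have hJ₁nn := JJ_nonneg (b := b) (N := N₁) hV hv
  have hJ₂nn := JJ_nonneg (b := b) (N := N₂) hV hv
  have hJ₁le := JJ_le (b := b) hV hNinf hN₁ hv
  have hJ₂le := JJ_le (b := b) hV hNinf hN₂ hv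
  have hJlip := JJ_lip (b := b) hV hNinf hN₁ hN₂ hv
  have hGlip := Gg_lip (b := b) (v := v) hNinf hN₁ hN₂
  have hG₁ := Gg_le_Gs (b := b) (v := v) hNinf hN₁
  have hG₂ := Gg_le_Gs (b := b) (v := v) hNinf hN₂
  rw [← hRp, ← hRdef, ← hM₁] at hJ₁le hJ₂le
  rw [← hRp, ← hRdef, ← hLJ] at hJlip
  rw [← hRp] at hGlip
  have hG₁nn : (0:ℝ) ≤ Gg b N₁ v := (Real.exp_pos _).le
  have hG₂nn : (0:ℝ) ≤ Gg b N₂ v := (Real.exp_pos _).le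
  have hGsnn := (Gs_pos (b := b) (Ninf := Ninf) v).le
  have habv : (0:ℝ) ≤ |v| := abs_nonneg v
  have hdN : (0:ℝ) ≤ |N₁ - N₂| := abs_nonneg _
  set P := Gs b Ninf v * |N₁ - N₂| with hP
  have hPnn : 0 ≤ P := mul_nonneg hGsnn hdN
  clear_value P
  -- bound on pseudoEq itself
  have hbd : ∀ N ∈ Set.Icc (Ninf/2) (2*Ninf),
      |pseudoEq b V_R V_F N v| ≤ (M₁/δ) * Gs b Ninf v := by
    intro N hN
    have hIN : δ ≤ Ifun b V_R V_F N := hIge N hN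
    have hINpos : 0 < Ifun b V_R V_F N := lt_of_lt_of_le hδ hIN
    have hJnn := JJ_nonneg (b := b) (N := N) hV hv
    have hJle := JJ_le (b := b) hV hNinf hN hv
    rw [← hRp, ← hRdef, ← hM₁] at hJle
    have hGle := Gg_le_Gs (b := b) (v := v) hNinf hN
    have hGnn : (0:ℝ) ≤ Gg b N v := (Real.exp_pos _).le
    rw [pseudoEq_eq, abs_mul, abs_mul]
    rw [abs_of_pos (one_div_pos.mpr hINpos), abs_of_nonneg hGnn, abs_of_nonneg hJnn]
    have hinv : 1 / Ifun b V_R V_F N ≤ 1/δ := one_div_le_one_div_of_le hδ hIN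
    calc 1 / Ifun b V_R V_F N * Gg b N v * JJ b V_R V_F N v
        ≤ (1/δ) * Gs b Ninf v * M₁ := by
          apply mul_le_mul (mul_le_mul hinv hGle (Real.exp_pos _).le
            (one_div_nonneg.mpr hδ.le)) hJle hJnn
          exact mul_nonneg (one_div_nonneg.mpr hδ.le) hGsnn
      _ = (M₁/δ) * Gs b Ninf v := by ring
  -- Lipschitz bound for pseudoEq
  have hsplit : pseudoEq b V_R V_F N₁ v - pseudoEq b V_R V_F N₂ v
      = (1/I₁ - 1/I₂) * (Gg b N₁ v * JJ b V_R V_F N₁ v)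
        + (1/I₂) * ((Gg b N₁ v - Gg b N₂ v) * JJ b V_R V_F N₁ v)
        + (1/I₂) * (Gg b N₂ v * (JJ b V_R V_F N₁ v - JJ b V_R V_F N₂ v)) := by
    rw [pseudoEq_eq, pseudoEq_eq, ← hI₁d, ← hI₂d]
    ring
  have hinv₂ : (0:ℝ) ≤ 1/I₂ := (one_div_pos.mpr hI₂pos).le
  have hinv₂le : 1/I₂ ≤ 1/δ := one_div_le_one_div_of_le hδ hI₂
  have t1 : |(1/I₁ - 1/I₂) * (Gg b N₁ v * JJ b V_R V_F N₁ v)|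
      ≤ ((L/δ^2) * M₁) * P := by
    rw [abs_mul]
    have hGJ : |Gg b N₁ v * JJ b V_R V_F N₁ v| ≤ Gs b Ninf v * M₁ := by
      rw [abs_mul, abs_of_nonneg hG₁nn, abs_of_nonneg hJ₁nn]
      exact mul_le_mul hG₁ hJ₁le hJ₁nn hGsnn
    calc |1/I₁ - 1/I₂| * |Gg b N₁ v * JJ b V_R V_F N₁ v|
        ≤ ((L/δ^2) * |N₁ - N₂|) * (Gs b Ninf v * M₁) := by
          apply mul_le_mul hinvlip hGJ (abs_nonneg _)
          exact mul_nonneg (div_nonneg hL (sq_nonneg δ)) (abs_nonneg _)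
      _ = ((L/δ^2) * M₁) * P := by rw [hP]; ring
  have t2 : |(1/I₂) * ((Gg b N₁ v - Gg b N₂ v) * JJ b V_R V_F N₁ v)|
      ≤ ((1/δ) * (|b| * (|v| + Rp)) * M₁) * P := by
    rw [abs_mul, abs_of_nonneg hinv₂, abs_mul, abs_of_nonneg hJ₁nn]
    calc (1/I₂) * (|Gg b N₁ v - Gg b N₂ v| * JJ b V_R V_F N₁ v)
        ≤ (1/δ) * ((Gs b Ninf v * (|b| * (|v| + Rp)) * |N₁ - N₂|) * M₁) := by
          apply mul_le_mul hinv₂le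
          · exact mul_le_mul hGlip hJ₁le hJ₁nn
              (mul_nonneg (mul_nonneg hGsnn (by positivity)) (abs_nonneg _))
          · exact mul_nonneg (abs_nonneg _) hJ₁nn
          · exact one_div_nonneg.mpr hδ.le
      _ = ((1/δ) * (|b| * (|v| + Rp)) * M₁) * P := by rw [hP]; ring
  have t3 : |(1/I₂) * (Gg b N₂ v * (JJ b V_R V_F N₁ v - JJ b V_R V_F N₂ v))|
      ≤ ((1/δ) * LJ) * P := by
    rw [abs_mul, abs_of_nonneg hinv₂, abs_mul, abs_of_nonneg hG₂nn]
    calc (1/I₂) * (Gg b N₂ v * |JJ b V_R V_F N₁ v - JJ b V_R V_F N₂ v|)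
        ≤ (1/δ) * (Gs b Ninf v * (LJ * |N₁ - N₂|)) := by
          apply mul_le_mul hinv₂le
          · exact mul_le_mul hG₂ hJlip (abs_nonneg _) hGsnn
          · exact mul_nonneg hG₂nn (abs_nonneg _)
          · exact one_div_nonneg.mpr hδ.le
      _ = ((1/δ) * LJ) * P := by rw [hP]; ring
  have hA : |pseudoEq b V_R V_F N₁ v - pseudoEq b V_R V_F N₂ v|
      ≤ ((L/δ^2) * M₁ + (1/δ) * (|b| * (|v| + Rp)) * M₁ + (1/δ) * LJ) * P := by
    rw [hsplit]
    calc |(1/I₁ - 1/I₂) * (Gg b N₁ v * JJ b V_R V_F N₁ v)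
          + (1/I₂) * ((Gg b N₁ v - Gg b N₂ v) * JJ b V_R V_F N₁ v)
          + (1/I₂) * (Gg b N₂ v * (JJ b V_R V_F N₁ v - JJ b V_R V_F N₂ v))|
        ≤ |(1/I₁ - 1/I₂) * (Gg b N₁ v * JJ b V_R V_F N₁ v)|
          + |(1/I₂) * ((Gg b N₁ v - Gg b N₂ v) * JJ b V_R V_F N₁ v)|
          + |(1/I₂) * (Gg b N₂ v * (JJ b V_R V_F N₁ v - JJ b V_R V_F N₂ v))| :=
          abs_add_three _ _ _
      _ ≤ ((L/δ^2) * M₁) * P + ((1/δ) * (|b| * (|v| + Rp)) * M₁) * P + ((1/δ) * LJ) * P := by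
          linarith
      _ = ((L/δ^2) * M₁ + (1/δ) * (|b| * (|v| + Rp)) * M₁ + (1/δ) * LJ) * P := by ring
  have key1 : (L/δ^2) * M₁ + (1/δ) * (|b| * (|v| + Rp)) * M₁ + (1/δ) * LJ
      ≤ ch * (1+|v|) := by
    rw [hch]
    have e1 : (L/δ^2) * M₁ * 1 ≤ (L/δ^2) * M₁ * (1+|v|) :=
      mul_le_mul_of_nonneg_left (show (1:ℝ) ≤ 1+|v| by linarith)
        (mul_nonneg (div_nonneg hL (sq_nonneg δ)) hM₁nn)
    have e2 : (1/δ) * (|b| * (|v| + Rp)) * M₁ ≤ (1/δ) * |b| * M₁ * (1+Rp) * (1+|v|) := by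
      have h1 : |v| + Rp ≤ (1+Rp)*(1+|v|) := by linarith [mul_nonneg hRpnn habv]
      have h2 : 0 ≤ (1/δ) * |b| * M₁ := by
        apply mul_nonneg (mul_nonneg (one_div_nonneg.mpr hδ.le) (abs_nonneg b)) hM₁nn
      calc (1/δ) * (|b| * (|v| + Rp)) * M₁ = ((1/δ) * |b| * M₁) * (|v| + Rp) := by ring
        _ ≤ ((1/δ) * |b| * M₁) * ((1+Rp)*(1+|v|)) := mul_le_mul_of_nonneg_left h1 h2
        _ = (1/δ) * |b| * M₁ * (1+Rp) * (1+|v|) := by ring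
    have e3 : (1/δ) * LJ * 1 ≤ (1/δ) * LJ * (1+|v|) :=
      mul_le_mul_of_nonneg_left (show (1:ℝ) ≤ 1+|v| by linarith)
        (mul_nonneg (one_div_nonneg.mpr hδ.le) hLJnn)
    linarith [e1, e2, e3]
  have hlip_h : |pseudoEq b V_R V_F N₁ v - pseudoEq b V_R V_F N₂ v|
      ≤ (ch * (1+|v|)) * P :=
    le_trans hA (mul_le_mul_of_nonneg_right key1 hPnn)
  have hone_le : (1:ℝ) ≤ 1 + |v| := by linarith
  have hx2 : (1+|v|) ≤ (1+|v|)^2 := by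
    have h := mul_nonneg habv habv
    have expand : (1+|v|)^2 = 1 + 2*|v| + |v| * |v| := by ring
    linarith
  constructor
  · calc |pseudoEq b V_R V_F N₁ v - pseudoEq b V_R V_F N₂ v|
        ≤ (ch * (1+|v|)) * P := hlip_h
      _ ≤ ((ch + cD) * (1+|v|)^2) * P := by
          apply mul_le_mul_of_nonneg_right _ hPnn
          calc ch * (1+|v|) ≤ ch * (1+|v|)^2 := mul_le_mul_of_nonneg_left hx2 hchnn
            _ ≤ (ch + cD) * (1+|v|)^2 := by linarith [mul_nonneg hcDnn (sq_nonneg (1+|v|))]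
      _ = (ch + cD) * ((1+|v|)^2 * Gs b Ninf v) * |N₁ - N₂| := by rw [hP]; ring
  · -- Dfun difference
    have hDsplit : Dfun b V_R V_F N₁ v - Dfun b V_R V_F N₂ v
        = (-(v - b*N₁)) * (pseudoEq b V_R V_F N₁ v - pseudoEq b V_R V_F N₂ v)
          + (b*(N₁ - N₂)) * pseudoEq b V_R V_F N₂ v
          - Set.indicator (Set.Ioi V_R) (fun _ => 1/I₁ - 1/I₂) v := by
      rw [Dfun, Dfun, ← hI₁d, ← hI₂d]
      by_cases hvR : v ∈ Set.Ioi V_R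
      · rw [Set.indicator_of_mem hvR, Set.indicator_of_mem hvR, Set.indicator_of_mem hvR]
        ring
      · rw [Set.indicator_of_notMem hvR, Set.indicator_of_notMem hvR,
          Set.indicator_of_notMem hvR]
        ring
    have hvbN : |(-(v - b*N₁))| ≤ (1+Rp) * (1+|v|) := by
      rw [abs_neg]
      calc |v - b*N₁| ≤ |v| + |b*N₁| := abs_sub _ _
        _ ≤ |v| + Rp := by
            have := bN_abs_le (b := b) hNinf hN₁
            rw [← hRp] at this
            linarith
        _ ≤ (1+Rp) * (1+|v|) := by linarith [mul_nonneg hRpnn habv]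
    have u1 : |(-(v - b*N₁)) * (pseudoEq b V_R V_F N₁ v - pseudoEq b V_R V_F N₂ v)|
        ≤ ((1+Rp) * ch * (1+|v|)^2) * P := by
      rw [abs_mul]
      calc |(-(v - b*N₁))| * |pseudoEq b V_R V_F N₁ v - pseudoEq b V_R V_F N₂ v|
          ≤ ((1+Rp) * (1+|v|)) * ((ch * (1+|v|)) * P) := by
            apply mul_le_mul hvbN hlip_h (abs_nonneg _)
            exact mul_nonneg (by linarith) (by linarith)
        _ = ((1+Rp) * ch * (1+|v|)^2) * P := by ring
    have u2 : |(b*(N₁ - N₂)) * pseudoEq b V_R V_F N₂ v|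
        ≤ (|b| * (M₁/δ)) * P := by
      rw [abs_mul, abs_mul]
      calc |b| * |N₁ - N₂| * |pseudoEq b V_R V_F N₂ v|
          ≤ |b| * |N₁ - N₂| * ((M₁/δ) * Gs b Ninf v) := by
            apply mul_le_mul_of_nonneg_left (hbd N₂ hN₂)
            positivity
        _ = (|b| * (M₁/δ)) * P := by rw [hP]; ring
    have u3 : |Set.indicator (Set.Ioi V_R) (fun _ => 1/I₁ - 1/I₂) v|
        ≤ ((L/δ^2) * EB) * P := by
      by_cases hvR : v ∈ Set.Ioi V_R
      · rw [Set.indicator_of_mem hvR]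
        have hone : (1:ℝ) ≤ EB * Gs b Ninf v := by
          rw [hEB, Gs, ← hRp, ← Real.exp_add]
          apply Real.one_le_exp
          have hvB : |v| ≤ max |V_R| |V_F| := by
            rw [abs_le]
            constructor
            · have h1 : -(max |V_R| |V_F|) ≤ -|V_R| := by simp [le_max_left]
              have h2 : -|V_R| ≤ V_R := neg_abs_le V_R
              have h3 : V_R < v := hvR
              linarith
            · have h2 : V_F ≤ |V_F| := le_abs_self V_F
              have h3 : |V_F| ≤ max |V_R| |V_F| := le_max_right _ _
              linarith [hv]
          have hsq : v^2 ≤ (max |V_R| |V_F|)^2 := by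
            rw [← sq_abs v]
            exact pow_le_pow_left₀ habv hvB 2
          have hRpv : 0 ≤ Rp * |v| := mul_nonneg hRpnn habv
          linarith
        calc |1/I₁ - 1/I₂| ≤ (L/δ^2) * |N₁ - N₂| := hinvlip
          _ = ((L/δ^2) * |N₁ - N₂|) * 1 := (mul_one _).symm
          _ ≤ ((L/δ^2) * |N₁ - N₂|) * (EB * Gs b Ninf v) := by
              apply mul_le_mul_of_nonneg_left hone
              exact mul_nonneg (div_nonneg hL (sq_nonneg δ)) hdN
          _ = ((L/δ^2) * EB) * P := by rw [hP]; ring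
      · rw [Set.indicator_of_notMem hvR]
        simp only [abs_zero]
        exact mul_nonneg (mul_nonneg (div_nonneg hL (sq_nonneg δ)) hEBnn) hPnn
    calc |Dfun b V_R V_F N₁ v - Dfun b V_R V_F N₂ v|
        ≤ |(-(v - b*N₁)) * (pseudoEq b V_R V_F N₁ v - pseudoEq b V_R V_F N₂ v)|
          + |(b*(N₁ - N₂)) * pseudoEq b V_R V_F N₂ v|
          + |Set.indicator (Set.Ioi V_R) (fun _ => 1/I₁ - 1/I₂) v| := by
          rw [hDsplit]
          refine le_trans (abs_sub _ _) ?_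
          exact add_le_add (abs_add_le _ _) le_rfl
      _ ≤ ((1+Rp) * ch * (1+|v|)^2) * P + (|b| * (M₁/δ)) * P + ((L/δ^2) * EB) * P := by
          linarith
      _ ≤ ((ch + cD) * (1+|v|)^2) * P := by
          have hx2sq : (1:ℝ) ≤ (1+|v|)^2 := by
            have h := mul_nonneg habv habv
            have expand : (1+|v|)^2 = 1 + 2*|v| + |v| * |v| := by ring
            linarith [habv]
          have hbM : 0 ≤ |b| * (M₁/δ) := mul_nonneg (abs_nonneg b) (div_nonneg hM₁nn hδ.le)
          have hLE : 0 ≤ (L/δ^2) * EB := mul_nonneg (div_nonneg hL (sq_nonneg δ)) hEBnn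
          have hcoef : (1+Rp) * ch * (1+|v|)^2 + |b| * (M₁/δ) + (L/δ^2) * EB
              ≤ (ch + cD) * (1+|v|)^2 := by
            rw [hcD]
            linarith [mul_nonneg hbM (sub_nonneg.mpr hx2sq),
              mul_nonneg hLE (sub_nonneg.mpr hx2sq),
              mul_nonneg hchnn (sq_nonneg (1+|v|))]
          calc ((1+Rp) * ch * (1+|v|)^2) * P + (|b| * (M₁/δ)) * P + ((L/δ^2) * EB) * P
              = ((1+Rp) * ch * (1+|v|)^2 + |b| * (M₁/δ) + (L/δ^2) * EB) * P := by ring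
            _ ≤ ((ch + cD) * (1+|v|)^2) * P := mul_le_mul_of_nonneg_right hcoef hPnn
      _ = (ch + cD) * ((1+|v|)^2 * Gs b Ninf v) * |N₁ - N₂| := by rw [hP]; ring

end Bounds4

lemma L2_assembly {V_F c K dN : ℝ} (hc : 0 ≤ c) (hdN : 0 ≤ dN) {u Φ : ℝ → ℝ}
    (hu : AEStronglyMeasurable u (volume.restrict (Set.Iic V_F)))
    (hΦint : IntegrableOn (fun v => Φ v ^ 2 * Real.exp (v^2/2)) (Set.Iic V_F))
    (hΦnn : ∀ v, 0 ≤ Φ v)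
    (hbd : ∀ v ≤ V_F, |u v| ≤ c * Φ v * dN)
    (hK : (∫ v in Set.Iic V_F, Φ v ^ 2 * Real.exp (v^2/2)) ≤ K) :
    IntegrableOn (fun v => u v ^ 2 * Real.exp (v^2/2)) (Set.Iic V_F) ∧
      Real.sqrt (∫ v in Set.Iic V_F, u v ^ 2 * Real.exp (v^2/2))
        ≤ ((c+1) * (Real.sqrt K + 1)) * dN := by
  have hKnn : 0 ≤ K :=
    le_trans (setIntegral_nonneg measurableSet_Iic
      (fun v _ => mul_nonneg (sq_nonneg _) (Real.exp_pos _).le)) hK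
  have hptbd : ∀ v ∈ Set.Iic V_F,
      u v ^ 2 * Real.exp (v^2/2) ≤ (c^2*dN^2) * (Φ v ^ 2 * Real.exp (v^2/2)) := by
    intro v hv
    have h1 := hbd v hv
    have h2 : u v ^ 2 ≤ (c * Φ v * dN)^2 := by
      rw [← sq_abs (u v)]
      exact pow_le_pow_left₀ (abs_nonneg _) h1 2
    calc u v ^ 2 * Real.exp (v^2/2) ≤ (c * Φ v * dN)^2 * Real.exp (v^2/2) :=
        mul_le_mul_of_nonneg_right h2 (Real.exp_pos _).le
      _ = (c^2*dN^2) * (Φ v ^ 2 * Real.exp (v^2/2)) := by ring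
  have hmeas : AEStronglyMeasurable (fun v => u v ^ 2 * Real.exp (v^2/2))
      (volume.restrict (Set.Iic V_F)) := by
    have h1 : AEStronglyMeasurable (fun v => u v ^ 2) (volume.restrict (Set.Iic V_F)) := by
      have := hu.mul hu
      simpa [pow_two] using hu.fun_mul hu
    exact h1.mul (Continuous.aestronglyMeasurable (by fun_prop))
  have hint : IntegrableOn (fun v => u v ^ 2 * Real.exp (v^2/2)) (Set.Iic V_F) := by
    apply Integrable.mono' (hΦint.const_mul (c^2*dN^2)) hmeas
    rw [ae_restrict_iff' measurableSet_Iic]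
    filter_upwards with v hv
    rw [Real.norm_eq_abs, abs_of_nonneg (mul_nonneg (sq_nonneg _) (Real.exp_pos _).le)]
    exact hptbd v hv
  refine ⟨hint, ?_⟩
  have hle : (∫ v in Set.Iic V_F, u v ^ 2 * Real.exp (v^2/2)) ≤ (c^2*dN^2) * K := by
    calc (∫ v in Set.Iic V_F, u v ^ 2 * Real.exp (v^2/2))
        ≤ ∫ v in Set.Iic V_F, (c^2*dN^2) * (Φ v ^ 2 * Real.exp (v^2/2)) :=
          setIntegral_mono_on hint (hΦint.const_mul _) measurableSet_Iic hptbd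
      _ = (c^2*dN^2) * ∫ v in Set.Iic V_F, Φ v ^ 2 * Real.exp (v^2/2) :=
          MeasureTheory.integral_const_mul _ _
      _ ≤ (c^2*dN^2) * K := mul_le_mul_of_nonneg_left hK (by positivity)
  have hfin : (∫ v in Set.Iic V_F, u v ^ 2 * Real.exp (v^2/2))
      ≤ (((c+1) * (Real.sqrt K + 1)) * dN)^2 := by
    refine le_trans hle ?_
    set s := Real.sqrt K with hs
    have hs2 : s^2 = K := Real.sq_sqrt hKnn
    have hsnn : 0 ≤ s := Real.sqrt_nonneg K
    have h1 : c*s ≤ (c+1)*(s+1) := by nlinarith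
    have h2 : (c*s)^2 ≤ ((c+1)*(s+1))^2 := pow_le_pow_left₀ (mul_nonneg hc hsnn) h1 2
    calc c^2*dN^2*K = (c*s)^2 * dN^2 := by rw [← hs2]; ring
      _ ≤ ((c+1)*(s+1))^2 * dN^2 := mul_le_mul_of_nonneg_right h2 (sq_nonneg dN)
      _ = (((c+1)*(s+1)) * dN)^2 := by ring
  calc Real.sqrt (∫ v in Set.Iic V_F, u v ^ 2 * Real.exp (v^2/2))
      ≤ Real.sqrt ((((c+1) * (Real.sqrt K + 1)) * dN)^2) := Real.sqrt_le_sqrt hfin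
    _ = ((c+1) * (Real.sqrt K + 1)) * dN := by
        apply Real.sqrt_sq
        have := Real.sqrt_nonneg K
        positivity

/-- Lipschitz dependence of the pseudo-equilibrium and of its `v`-derivative on
`N ∈ [N_∞/2, 2N_∞]`, in the weighted `L²(φ)` norm with weight `φ(v) = e^{v²/2}` on
`(−∞, V_F]`; in particular all these weighted norms are finite. -/
theorem pseudoEq_lipschitz_L2 (b V_R V_F : ℝ) (hV : V_R < V_F)
    (Ninf : ℝ) (hNinf : 0 < Ninf) :
    ∃ C : ℝ, 0 < C ∧
      ∀ N₁ ∈ Set.Icc (Ninf / 2) (2 * Ninf), ∀ N₂ ∈ Set.Icc (Ninf / 2) (2 * Ninf),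
        IntegrableOn
          (fun v => (pseudoEq b V_R V_F N₁ v - pseudoEq b V_R V_F N₂ v) ^ 2 *
            Real.exp (v ^ 2 / 2)) (Set.Iic V_F) ∧
        IntegrableOn
          (fun v => (deriv (pseudoEq b V_R V_F N₁) v - deriv (pseudoEq b V_R V_F N₂) v) ^ 2 *
            Real.exp (v ^ 2 / 2)) (Set.Iic V_F) ∧
        Real.sqrt (∫ v in Set.Iic V_F,
            (pseudoEq b V_R V_F N₁ v - pseudoEq b V_R V_F N₂ v) ^ 2 *
              Real.exp (v ^ 2 / 2)) ≤ C * |N₁ - N₂| ∧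
        Real.sqrt (∫ v in Set.Iic V_F,
            (deriv (pseudoEq b V_R V_F N₁) v - deriv (pseudoEq b V_R V_F N₂) v) ^ 2 *
              Real.exp (v ^ 2 / 2)) ≤ C * |N₁ - N₂| := by
  obtain ⟨c, hc, hpt⟩ := pseudo_pointwise (b := b) (V_R := V_R) (V_F := V_F) hV hNinf
  set Φ : ℝ → ℝ := fun v => (1+|v|)^2 * Gs b Ninf v with hΦ
  have hΦnn : ∀ v, 0 ≤ Φ v := fun v => mul_nonneg (by positivity) (Gs_pos v).le
  have hΦint : IntegrableOn (fun v => Φ v ^ 2 * Real.exp (v^2/2)) (Set.Iic V_F) := by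
    have funeq : (fun v => Φ v ^ 2 * Real.exp (v^2/2))
        = fun v => (1+|v|)^4 * Real.exp (-v^2/2 + (2*(|b| * (2*Ninf))) * |v|) := by
      funext v
      rw [hΦ]
      simp only []
      rw [Gs]
      calc ((1+|v|)^2 * Real.exp (-v^2/2 + (|b| * (2*Ninf)) * |v|))^2 * Real.exp (v^2/2)
          = (1+|v|)^4 * (Real.exp (-v^2/2 + (|b| * (2*Ninf)) * |v|)
              * Real.exp (-v^2/2 + (|b| * (2*Ninf)) * |v|) * Real.exp (v^2/2)) := by ring
        _ = (1+|v|)^4 * Real.exp ((-v^2/2 + (|b| * (2*Ninf)) * |v|)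
              + (-v^2/2 + (|b| * (2*Ninf)) * |v|) + v^2/2) := by
            rw [← Real.exp_add, ← Real.exp_add]
        _ = (1+|v|)^4 * Real.exp (-v^2/2 + (2*(|b| * (2*Ninf))) * |v|) := by
            congr 1
            ring_nf
    rw [funeq]
    have ha : 0 ≤ 2*(|b| * (2*Ninf)) := by positivity
    exact (integrable_poly_gauss _ ha 4).integrableOn
  set K := ∫ v in Set.Iic V_F, Φ v ^ 2 * Real.exp (v^2/2) with hKdef
  have hsK : 0 ≤ Real.sqrt K := Real.sqrt_nonneg K
  refine ⟨(c+1) * (Real.sqrt K + 1), by nlinarith, fun N₁ hN₁ N₂ hN₂ => ?_⟩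
  have hdN : 0 ≤ |N₁ - N₂| := abs_nonneg _
  -- part 1 : pseudoEq difference
  have hu1 : AEStronglyMeasurable (fun v => pseudoEq b V_R V_F N₁ v - pseudoEq b V_R V_F N₂ v)
      (volume.restrict (Set.Iic V_F)) :=
    ((continuous_pseudoEq b V_R V_F N₁).sub
      (continuous_pseudoEq b V_R V_F N₂)).aestronglyMeasurable.restrict
  have hbd1 : ∀ v ≤ V_F, |pseudoEq b V_R V_F N₁ v - pseudoEq b V_R V_F N₂ v|
      ≤ c * Φ v * |N₁ - N₂| := by
    intro v hv
    have := (hpt N₁ hN₁ N₂ hN₂ v hv).1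
    calc |pseudoEq b V_R V_F N₁ v - pseudoEq b V_R V_F N₂ v|
        ≤ c * ((1+|v|)^2 * Gs b Ninf v) * |N₁ - N₂| := this
      _ = c * Φ v * |N₁ - N₂| := by rw [hΦ]
  obtain ⟨hint1, hsq1⟩ := L2_assembly hc hdN hu1 hΦint hΦnn hbd1 (le_of_eq hKdef.symm)
  -- part 2 : derivative difference
  have haeD : ∀ N : ℝ, (fun v => deriv (pseudoEq b V_R V_F N) v)
      =ᵐ[volume.restrict (Set.Iic V_F)] (fun v => Dfun b V_R V_F N v) := by
    intro N
    apply ae_restrict_of_ae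
    have hsub : {v : ℝ | ¬ deriv (pseudoEq b V_R V_F N) v = Dfun b V_R V_F N v} ⊆ {V_R} := by
      intro v hv
      by_contra hne
      exact hv (deriv_pseudoEq' hV (fun h => hne (by simp [h])))
    exact measure_mono_null hsub Real.volume_singleton
  have hu2 : AEStronglyMeasurable (fun v => Dfun b V_R V_F N₁ v - Dfun b V_R V_F N₂ v)
      (volume.restrict (Set.Iic V_F)) := by
    have hD : ∀ N : ℝ, AEStronglyMeasurable (fun v => Dfun b V_R V_F N v)
        (volume.restrict (Set.Iic V_F)) := by
      intro N
      apply AEStronglyMeasurable.sub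
      · exact ((continuous_id.sub continuous_const).neg.mul
          (continuous_pseudoEq b V_R V_F N)).aestronglyMeasurable.restrict
      · exact ((measurable_const.indicator measurableSet_Ioi).aestronglyMeasurable).restrict
    exact (hD N₁).sub (hD N₂)
  have hbd2 : ∀ v ≤ V_F, |Dfun b V_R V_F N₁ v - Dfun b V_R V_F N₂ v|
      ≤ c * Φ v * |N₁ - N₂| := by
    intro v hv
    have := (hpt N₁ hN₁ N₂ hN₂ v hv).2
    calc |Dfun b V_R V_F N₁ v - Dfun b V_R V_F N₂ v|
        ≤ c * ((1+|v|)^2 * Gs b Ninf v) * |N₁ - N₂| := this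
      _ = c * Φ v * |N₁ - N₂| := by rw [hΦ]
  obtain ⟨hint2, hsq2⟩ := L2_assembly hc hdN hu2 hΦint hΦnn hbd2 (le_of_eq hKdef.symm)
  have haediff : (fun v => (deriv (pseudoEq b V_R V_F N₁) v - deriv (pseudoEq b V_R V_F N₂) v)^2
        * Real.exp (v^2/2))
      =ᵐ[volume.restrict (Set.Iic V_F)]
      (fun v => (Dfun b V_R V_F N₁ v - Dfun b V_R V_F N₂ v)^2 * Real.exp (v^2/2)) := by
    filter_upwards [haeD N₁, haeD N₂] with v h1 h2
    rw [h1, h2]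
  refine ⟨hint1, hint2.congr haediff.symm, hsq1, ?_⟩
  rw [integral_congr_ae haediff]
  exact hsq2
end
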